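/- For all N ≥ 3 and all s ∈ (0,1), |π_N(s)| ≤ |π(s)| + 1, where π(s) = 1 + ln s and π_N = Π_N' with Π_N the fourth-order Taylor regularization of s·ln s at 1/N. -/

import Mathlib

/-- π_N = Π_N', the derivative of the fourth-order Taylor regularization of
Π(s) = s ln s at 1/N. -/
noncomputable def piN (N : ℕ) (s : ℝ) : ℝ :=
  if (1 : ℝ) / (N : ℝ) ≤ s then 1 + Real.log s
  else 1 + Real.log (1 / (N : ℝ))
    + (N : ℝ) * (s - 1 / (N : ℝ))
    - ((N : ℝ)^2 / 2) * (s - 1 / (N : ℝ))^2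
    + ((N : ℝ)^3 / 3) * (s - 1 / (N : ℝ))^3

/-- For N ≥ 3 and s ∈ (0,1), |π_N(s)| ≤ |π(s)| + 1 with π(s) = 1 + ln s. -/
theorem stmt_10 :
    ∀ N : ℕ, 3 ≤ N → ∀ s ∈ Set.Ioo (0 : ℝ) 1,
      |piN N s| ≤ |1 + Real.log s| + 1 := by
  intro N hN s hs
  obtain ⟨hs0, hs1⟩ := hs
  unfold piN
  split_ifs with h
  · nlinarith [abs_nonneg (1 + Real.log s), le_abs_self (1 + Real.log s),
      neg_abs_le (1 + Real.log s)]
  · push_neg at h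
    have hNpos : (0 : ℝ) < N := by positivity
    have hN3 : (3 : ℝ) ≤ (N : ℝ) := by exact_mod_cast hN
    set x : ℝ := (N : ℝ) * (s - 1 / N) with hxdef
    have hx0 : x < 0 := by
      have : s - 1 / N < 0 := by linarith
      nlinarith
    have hx1 : -1 < x := by
      have : -(1/(N:ℝ)) < s - 1/N := by linarith
      have h2 : (N:ℝ) * (-(1/N)) < (N:ℝ) * (s - 1/N) := by
        exact mul_lt_mul_of_pos_left this hNpos
      have h3 : (N:ℝ) * (-(1/N)) = -1 := by field_simp
      linarith [h3 ▸ h2]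
    -- rewrite the polynomial in terms of x
    have hsq : ((N : ℝ)^2 / 2) * (s - 1 / N)^2 = x^2 / 2 := by
      rw [hxdef]; ring
    have hcb : ((N : ℝ)^3 / 3) * (s - 1 / N)^3 = x^3 / 3 := by
      rw [hxdef]; ring
    rw [hsq, hcb]
    -- log facts
    have hln3 : (1 : ℝ) < Real.log 3 := by
      have := Real.exp_one_lt_d9
      calc (1:ℝ) = Real.log (Real.exp 1) := (Real.log_exp 1).symm
        _ < Real.log 3 := Real.log_lt_log (Real.exp_pos 1) (by linarith)
    have hlogN : Real.log 3 ≤ Real.log N := Real.log_le_log (by norm_num) hN3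
    have hlog1N : Real.log (1 / (N : ℝ)) = -Real.log N := by
      rw [one_div, Real.log_inv]
    have hlogs_neg : 1 + Real.log s < 0 := by
      have : Real.log s < Real.log (1 / N) := Real.log_lt_log hs0 h
      rw [hlog1N] at this
      linarith
    have habs : |1 + Real.log s| = -(1 + Real.log s) := abs_of_neg hlogs_neg
    rw [habs]
    -- ln s = ln(1/N) + ln(1+x)
    have hNs : s = (1 + x) / N := by
      rw [hxdef]; field_simp; ring
    have h1x : (0 : ℝ) < 1 + x := by linarith
    have hlogs : Real.log s = Real.log (1 + x) - Real.log N := by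
      rw [hNs, Real.log_div (by linarith) (ne_of_gt hNpos)]
    have hlog1x : Real.log (1 + x) ≤ x := by
      have := Real.log_le_sub_one_of_pos h1x
      linarith
    have hval_neg : 1 + Real.log (1/(N:ℝ)) + x - x^2/2 + x^3/3 ≤ 0 := by
      rw [hlog1N]
      nlinarith
    rw [abs_of_nonpos hval_neg, hlog1N, hlogs]
    nlinarith
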